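/- For every stable coloring f : [ℕ]² → ℕ (meaning lim_s f(x,s) exists for every x), if there exists an infinite set H that is thin for the limit coloring f̃(x) = lim_s f(x,s) (i.e. f̃ omits some value on H), then H together with f computes an infinite set thin for f itself. -/

import Mathlib

open Classical Filter

noncomputable section

/-- Codes for partial functions recursive in an oracle. -/
inductive OCode : Type
  | zero | succ | left | right | oracle
  | pair (a b : OCode) | comp (a b : OCode) | prec (a b : OCode) | rfind' (a : OCode)

/-- Evaluation of an oracle code with oracle `O`. -/
def OCode.eval (O : ℕ →. ℕ) : OCode → ℕ →. ℕ
  | .zero => pure 0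
  | .succ => Nat.succ
  | .left => ↑fun n : ℕ => n.unpair.1
  | .right => ↑fun n : ℕ => n.unpair.2
  | .oracle => O
  | .pair a b => fun n => Nat.pair <$> a.eval O n <*> b.eval O n
  | .comp a b => fun n => b.eval O n >>= a.eval O
  | .prec a b => Nat.unpaired fun m n =>
      n.rec (a.eval O m) fun y IH => do let i ← IH; b.eval O (Nat.pair m (Nat.pair y i))
  | .rfind' a => fun n => Nat.rfind fun m => (fun k => k = 0) <$> a.eval O (Nat.pair n m)

/-- An injective numbering of oracle codes. -/
def OCode.encodeC : OCode → ℕ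
  | .zero => Nat.pair 0 0
  | .succ => Nat.pair 1 0
  | .left => Nat.pair 2 0
  | .right => Nat.pair 3 0
  | .oracle => Nat.pair 4 0
  | .pair a b => Nat.pair 5 (Nat.pair a.encodeC b.encodeC)
  | .comp a b => Nat.pair 6 (Nat.pair a.encodeC b.encodeC)
  | .prec a b => Nat.pair 7 (Nat.pair a.encodeC b.encodeC)
  | .rfind' a => Nat.pair 8 a.encodeC

/-- `f` is partial recursive in the oracle `O`. -/
def RecIn (O : ℕ →. ℕ) (f : ℕ →. ℕ) : Prop := ∃ c : OCode, c.eval O = f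

/-- The `e`-th partial function recursive in `O` (`Φ_e^O`). -/
def phi (O : ℕ →. ℕ) (e : ℕ) : ℕ →. ℕ :=
  if h : ∃ c : OCode, c.encodeC = e then h.choose.eval O else fun _ => Part.none

/-- The characteristic function of a set of naturals, as an oracle. -/
def chOracle (X : Set ℕ) : ℕ →. ℕ := fun n => Part.some (if n ∈ X then 1 else 0)

/-- A total function as an oracle. -/
def fnOracle (f : ℕ → ℕ) : ℕ →. ℕ := fun n => Part.some (f n)

/-- A two-variable total function as an oracle. -/
def pairFnOracle (f : ℕ → ℕ → ℕ) : ℕ →. ℕ :=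
  fun n => Part.some (f n.unpair.1 n.unpair.2)

/-- The Turing jump of a set `X` : the halting problem relative to `X`. -/
def jumpSet (X : Set ℕ) : Set ℕ := {e | (phi (chOracle X) e e).Dom}

/-- The effective join of two sets of naturals. -/
def joinSet (A B : Set ℕ) : Set ℕ :=
  {n | (n % 2 = 0 ∧ n / 2 ∈ A) ∨ (n % 2 = 1 ∧ n / 2 ∈ B)}

/-- The join of two oracles. -/
def joinO (O₁ O₂ : ℕ →. ℕ) : ℕ →. ℕ :=
  fun n => if n % 2 = 0 then O₁ (n / 2) else O₂ (n / 2)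

/-- Turing reducibility between sets of naturals. -/
def setLEset (A B : Set ℕ) : Prop :=
  RecIn (chOracle B) (fnOracle fun n => if n ∈ A then 1 else 0)


/-- primitive recursion on totals -/
def precFn (f g : ℕ → ℕ) : ℕ → ℕ :=
  Nat.unpaired fun m k => k.rec (f m) fun y IH => g (Nat.pair m (Nat.pair y IH))

lemma eval_prec_fn {O : ℕ →. ℕ} {a b : OCode} {f g : ℕ → ℕ}
    (ha : a.eval O = fnOracle f) (hb : b.eval O = fnOracle g) :
    (OCode.prec a b).eval O = fnOracle (precFn f g) := by
  funext n
  simp only [OCode.eval, fnOracle, precFn, Nat.unpaired, ha, hb]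
  induction n.unpair.2 with
  | zero => rfl
  | succ k ih =>
    simp only [Nat.rec_add_one]
    simp only [Part.bind_eq_bind] at ih ⊢
    rw [ih, Part.bind_some]

namespace RecIn

lemma oracleSelf (O : ℕ →. ℕ) : RecIn O O := ⟨.oracle, rfl⟩

lemma compT {O : ℕ →. ℕ} {f g : ℕ → ℕ} (hf : RecIn O (fnOracle f))
    (hg : RecIn O (fnOracle g)) : RecIn O (fnOracle fun n => f (g n)) := by
  obtain ⟨a, ha⟩ := hf; obtain ⟨b, hb⟩ := hg
  exact ⟨.comp a b, by funext n; simp [OCode.eval, ha, hb, fnOracle]; exact Part.bind_some (g n) (fnOracle f)⟩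

lemma pairT {O : ℕ →. ℕ} {f g : ℕ → ℕ} (hf : RecIn O (fnOracle f))
    (hg : RecIn O (fnOracle g)) : RecIn O (fnOracle fun n => Nat.pair (f n) (g n)) := by
  obtain ⟨a, ha⟩ := hf; obtain ⟨b, hb⟩ := hg
  exact ⟨.pair a b, by funext n; simp [OCode.eval, ha, hb, fnOracle, Seq.seq]⟩

lemma precT {O : ℕ →. ℕ} {f g : ℕ → ℕ} (hf : RecIn O (fnOracle f))
    (hg : RecIn O (fnOracle g)) : RecIn O (fnOracle (precFn f g)) := by
  obtain ⟨a, ha⟩ := hf; obtain ⟨b, hb⟩ := hg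
  exact ⟨.prec a b, eval_prec_fn ha hb⟩

lemma ofNatPrimrec {g : ℕ → ℕ} (h : Nat.Primrec g) (O : ℕ →. ℕ) :
    RecIn O (fnOracle g) := by
  induction h with
  | zero => exact ⟨.zero, rfl⟩
  | succ => exact ⟨.succ, rfl⟩
  | left => exact ⟨.left, rfl⟩
  | right => exact ⟨.right, rfl⟩
  | pair _ _ ihf ihg => exact pairT ihf ihg
  | comp _ _ ihf ihg => exact compT ihf ihg
  | prec _ _ ihf ihg => exact precT ihf ihg

lemma ofPrim {g : ℕ → ℕ} (h : Primrec g) (O : ℕ →. ℕ) : RecIn O (fnOracle g) :=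
  ofNatPrimrec (Primrec.nat_iff.1 h) O

lemma of_eq {O : ℕ →. ℕ} {f g : ℕ → ℕ} (hf : RecIn O (fnOracle f))
    (h : ∀ n, f n = g n) : RecIn O (fnOracle g) := by
  have : f = g := funext h
  rwa [this] at hf

lemma graft {O : ℕ →. ℕ} {u : ℕ → ℕ} (hu : RecIn O (fnOracle u)) {r h g : ℕ → ℕ}
    (hr : Primrec r) (hh : Primrec h)
    (hg : ∀ n, g n = h (Nat.pair n (u (r n)))) : RecIn O (fnOracle g) :=
  of_eq (compT (ofPrim hh O) (pairT (ofPrim Primrec.id O) (compT hu (ofPrim hr O))))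
    fun n => (hg n).symm

lemma graft2 {O : ℕ →. ℕ} {u₁ u₂ : ℕ → ℕ} (hu₁ : RecIn O (fnOracle u₁))
    (hu₂ : RecIn O (fnOracle u₂)) {r₁ r₂ h g : ℕ → ℕ}
    (hr₁ : Primrec r₁) (hr₂ : Primrec r₂) (hh : Primrec h)
    (hg : ∀ n, g n = h (Nat.pair n (Nat.pair (u₁ (r₁ n)) (u₂ (r₂ n))))) :
    RecIn O (fnOracle g) :=
  of_eq (compT (ofPrim hh O) (pairT (ofPrim Primrec.id O)
      (pairT (compT hu₁ (ofPrim hr₁ O)) (compT hu₂ (ofPrim hr₂ O)))))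
    fun n => (hg n).symm

end RecIn

/- ============ construction ============ -/

section Construction

/-- entry check: input `pair (pair m b) n`; returns 0 iff `b = 1` and `f m n = c`. -/
def ecF (o : ℕ → ℕ) (c : ℕ) : ℕ → ℕ := fun p =>
  if p.unpair.1.unpair.2 = 1 ∧ o (2 * Nat.pair p.unpair.1.unpair.1 p.unpair.2 + 1) = c then 0
  else 1

def baseF : ℕ → ℕ := fun m => Nat.pair m.unpair.2 1

def loopStepF (o : ℕ → ℕ) (c : ℕ) : ℕ → ℕ := fun t =>
  Nat.pair t.unpair.2.unpair.2.unpair.1.unpair.1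
    (t.unpair.2.unpair.2.unpair.2 *
      ecF o c (Nat.pair t.unpair.2.unpair.2.unpair.1.unpair.2 t.unpair.1.unpair.1))

def loopF (o : ℕ → ℕ) (c : ℕ) : ℕ → ℕ := precFn baseF (loopStepF o c)

def chi1F (o : ℕ → ℕ) (c : ℕ) : ℕ → ℕ := fun p =>
  (if o (2 * p.unpair.1) = 1 then 1 else 0) * (loopF o c (Nat.pair p p.unpair.1)).unpair.2

def KstepF (o : ℕ → ℕ) (c : ℕ) : ℕ → ℕ := fun t =>
  Nat.pair t.unpair.2.unpair.2
    (Nat.pair t.unpair.2.unpair.1 (chi1F o c (Nat.pair t.unpair.2.unpair.1 t.unpair.2.unpair.2)))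

def KF (o : ℕ → ℕ) (c : ℕ) : ℕ → ℕ := precFn (fun _ => 0) (KstepF o c)

def chiF (o : ℕ → ℕ) (c : ℕ) : ℕ → ℕ := fun n =>
  chi1F o c (Nat.pair n (KF o c (Nat.pair 0 n)))

/- ============ RecIn lemmas ============ -/

private lemma u1P : Primrec (fun n : ℕ => n.unpair.1) := Primrec.fst.comp Primrec.unpair
private lemma u2P : Primrec (fun n : ℕ => n.unpair.2) := Primrec.snd.comp Primrec.unpair

variable {O : ℕ →. ℕ} {o : ℕ → ℕ} {c : ℕ}

lemma recIn_ecF (ho : RecIn O (fnOracle o)) : RecIn O (fnOracle (ecF o c)) := by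
  refine RecIn.graft ho
    (r := fun p => 2 * Nat.pair p.unpair.1.unpair.1 p.unpair.2 + 1)
    (h := fun q => if q.unpair.1.unpair.1.unpair.2 = 1 ∧ q.unpair.2 = c then 0 else 1)
    ?_ ?_ ?_
  · exact Primrec.succ.comp
      ((Primrec.nat_mul.comp (Primrec.const 2)
        (Primrec₂.natPair.comp (u1P.comp u1P) u2P)))
  · exact Primrec.ite
      ((Primrec.eq.comp (u2P.comp (u1P.comp u1P)) (Primrec.const 1)).and
        (Primrec.eq.comp u2P (Primrec.const c)))
      (Primrec.const 0) (Primrec.const 1)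
  · intro p; simp [ecF, Nat.unpair_pair]

lemma recIn_loopF (ho : RecIn O (fnOracle o)) : RecIn O (fnOracle (loopF o c)) := by
  refine RecIn.precT (RecIn.ofPrim ?_ O) ?_
  · exact Primrec₂.natPair.comp u2P (Primrec.const 1)
  · refine RecIn.graft (recIn_ecF (c := c) ho)
      (r := fun t => Nat.pair t.unpair.2.unpair.2.unpair.1.unpair.2 t.unpair.1.unpair.1)
      (h := fun q => Nat.pair q.unpair.1.unpair.2.unpair.2.unpair.1.unpair.1
        (q.unpair.1.unpair.2.unpair.2.unpair.2 * q.unpair.2)) ?_ ?_ ?_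
    · exact Primrec₂.natPair.comp (u2P.comp (u1P.comp (u2P.comp u2P))) (u1P.comp u1P)
    · exact Primrec₂.natPair.comp (u1P.comp (u1P.comp (u2P.comp (u2P.comp u1P))))
        (Primrec.nat_mul.comp (u2P.comp (u2P.comp (u2P.comp u1P))) u2P)
    · intro t; simp [loopStepF, Nat.unpair_pair]

lemma recIn_chi1F (ho : RecIn O (fnOracle o)) : RecIn O (fnOracle (chi1F o c)) := by
  refine RecIn.graft2 ho (recIn_loopF (c := c) ho)
    (r₁ := fun p => 2 * p.unpair.1) (r₂ := fun p => Nat.pair p p.unpair.1)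
    (h := fun q => (if q.unpair.2.unpair.1 = 1 then 1 else 0) * q.unpair.2.unpair.2.unpair.2)
    ?_ ?_ ?_ ?_
  · exact Primrec.nat_mul.comp (Primrec.const 2) u1P
  · exact Primrec₂.natPair.comp Primrec.id u1P
  · exact Primrec.nat_mul.comp
      (Primrec.ite (Primrec.eq.comp (u1P.comp u2P) (Primrec.const 1))
        (Primrec.const 1) (Primrec.const 0))
      (u2P.comp (u2P.comp u2P))
  · intro p; simp [chi1F, Nat.unpair_pair]

lemma recIn_KF (ho : RecIn O (fnOracle o)) : RecIn O (fnOracle (KF o c)) := by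
  refine RecIn.precT (RecIn.ofPrim (Primrec.const 0) O) ?_
  refine RecIn.graft (recIn_chi1F (c := c) ho)
    (r := fun t => Nat.pair t.unpair.2.unpair.1 t.unpair.2.unpair.2)
    (h := fun q => Nat.pair q.unpair.1.unpair.2.unpair.2
      (Nat.pair q.unpair.1.unpair.2.unpair.1 q.unpair.2)) ?_ ?_ ?_
  · exact Primrec₂.natPair.comp (u1P.comp u2P) (u2P.comp u2P)
  · exact Primrec₂.natPair.comp (u2P.comp (u2P.comp u1P))
      (Primrec₂.natPair.comp (u1P.comp (u2P.comp u1P)) u2P)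
  · intro t; simp [KstepF, Nat.unpair_pair]

lemma recIn_chiF (ho : RecIn O (fnOracle o)) : RecIn O (fnOracle (chiF o c)) := by
  have inner : RecIn O (fnOracle fun n => Nat.pair n (KF o c (Nat.pair 0 n))) := by
    refine RecIn.graft (recIn_KF (c := c) ho)
      (r := fun n => Nat.pair 0 n) (h := id) ?_ Primrec.id ?_
    · exact Primrec₂.natPair.comp (Primrec.const 0) Primrec.id
    · intro n; simp [Nat.unpair_pair]
  exact RecIn.of_eq (RecIn.compT (recIn_chi1F (c := c) ho) inner) fun n => rfl

/- ============ math lemmas ============ -/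

lemma precFn_zero (f g : ℕ → ℕ) (m : ℕ) : precFn f g (Nat.pair m 0) = f m := by
  simp [precFn, Nat.unpaired]

lemma precFn_succ (f g : ℕ → ℕ) (m j : ℕ) :
    precFn f g (Nat.pair m (j + 1)) =
      g (Nat.pair m (Nat.pair j (precFn f g (Nat.pair m j)))) := by
  simp [precFn, Nat.unpaired]

def dropF : ℕ → ℕ → ℕ
  | 0, K => K
  | j + 1, K => (dropF j K).unpair.1

def prodF (o : ℕ → ℕ) (c n : ℕ) : ℕ → ℕ → ℕ
  | 0, _ => 1
  | j + 1, K => prodF o c n j K * ecF o c (Nat.pair (dropF j K).unpair.2 n)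

lemma loopF_pair (o : ℕ → ℕ) (c n K : ℕ) (j : ℕ) :
    loopF o c (Nat.pair (Nat.pair n K) j) = Nat.pair (dropF j K) (prodF o c n j K) := by
  induction j with
  | zero => simp [loopF, precFn_zero, baseF, Nat.unpair_pair, dropF, prodF]
  | succ j ih =>
    simp only [loopF] at ih ⊢
    rw [precFn_succ, ih, loopStepF]
    simp [Nat.unpair_pair, dropF, prodF]

lemma ecF_pair (o : ℕ → ℕ) (c m b n : ℕ) :
    ecF o c (Nat.pair (Nat.pair m b) n) =
      if b = 1 ∧ o (2 * Nat.pair m n + 1) = c then 0 else 1 := by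
  simp [ecF, Nat.unpair_pair]

lemma ecF_le_one (o : ℕ → ℕ) (c p : ℕ) : ecF o c p ≤ 1 := by
  unfold ecF; split <;> omega

lemma prodF_le_one (o : ℕ → ℕ) (c n : ℕ) : ∀ j K, prodF o c n j K ≤ 1
  | 0, _ => le_refl 1
  | j + 1, K => mul_le_one' (prodF_le_one o c n j K) (ecF_le_one o c _)

lemma KF_succ (o : ℕ → ℕ) (c m j : ℕ) :
    KF o c (Nat.pair m (j + 1)) =
      Nat.pair (KF o c (Nat.pair m j))
        (Nat.pair j (chi1F o c (Nat.pair j (KF o c (Nat.pair m j))))) := by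
  simp only [KF]
  rw [precFn_succ]
  simp [KstepF, Nat.unpair_pair]

lemma dropF_KF (o : ℕ → ℕ) (c k : ℕ) :
    ∀ j, j ≤ k → dropF j (KF o c (Nat.pair 0 k)) = KF o c (Nat.pair 0 (k - j)) := by
  intro j
  induction j with
  | zero => intro _; simp [dropF]
  | succ j ih =>
    intro hj
    have hj' : j ≤ k := by omega
    have h1 : k - j = (k - (j + 1)) + 1 := by omega
    rw [dropF, ih hj', h1, KF_succ, Nat.unpair_pair]

lemma chiF_eq (o : ℕ → ℕ) (c n : ℕ) :
    chiF o c n =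
      (if o (2 * n) = 1 then 1 else 0) * prodF o c n n (KF o c (Nat.pair 0 n)) := by
  show chi1F o c _ = _
  rw [chi1F]
  rw [Nat.unpair_pair]
  rw [loopF_pair, Nat.unpair_pair]

lemma chiF_le_one (o : ℕ → ℕ) (c n : ℕ) : chiF o c n ≤ 1 := by
  rw [chiF_eq]
  refine mul_le_one' ?_ (prodF_le_one o c n n _)
  split <;> omega

lemma prodF_ne_zero (o : ℕ → ℕ) (c n k : ℕ) :
    ∀ j, j ≤ k →
      (prodF o c n j (KF o c (Nat.pair 0 k)) ≠ 0 ↔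
        ∀ m, k - j ≤ m → m < k → ¬(chiF o c m = 1 ∧ o (2 * Nat.pair m n + 1) = c)) := by
  intro j
  induction j with
  | zero =>
    intro _
    constructor
    · intro _ m hm1 hm2 _; omega
    · intro _; simp [prodF]
  | succ j ih =>
    intro hj
    have hj' : j ≤ k := by omega
    set m0 := k - (j + 1) with hm0
    have h1 : k - j = m0 + 1 := by omega
    rw [prodF, Nat.mul_ne_zero_iff, ih hj', dropF_KF o c k j hj', h1, KF_succ, Nat.unpair_pair]
    have hch : chi1F o c (Nat.pair m0 (KF o c (Nat.pair 0 m0))) = chiF o c m0 := rfl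
    rw [hch, ecF_pair]
    have he : (if chiF o c m0 = 1 ∧ o (2 * Nat.pair m0 n + 1) = c then 0 else 1) ≠ 0 ↔
        ¬(chiF o c m0 = 1 ∧ o (2 * Nat.pair m0 n + 1) = c) := by
      split <;> simp_all
    rw [he]
    constructor
    · rintro ⟨hall, hq⟩ m hm1 hm2
      rcases eq_or_lt_of_le hm1 with h | h
      · rwa [← h]
      · exact hall m (by omega) hm2
    · intro hall
      exact ⟨fun m hm1 hm2 => hall m (by omega) hm2, hall m0 le_rfl (by omega)⟩

lemma chiF_one_iff (o : ℕ → ℕ) (c n : ℕ) :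
    chiF o c n = 1 ↔
      o (2 * n) = 1 ∧ ∀ m < n, chiF o c m = 1 → o (2 * Nat.pair m n + 1) ≠ c := by
  rw [chiF_eq, mul_eq_one]
  have hp := prodF_ne_zero o c n n n le_rfl
  have hle := prodF_le_one o c n n (KF o c (Nat.pair 0 n))
  have h2 : prodF o c n n (KF o c (Nat.pair 0 n)) = 1 ↔
      prodF o c n n (KF o c (Nat.pair 0 n)) ≠ 0 := by omega
  rw [h2, hp]
  constructor
  · rintro ⟨h1, hall⟩
    constructor
    · by_contra hno
      rw [if_neg hno] at h1
      simp at h1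
    · intro m hm hchi hc
      exact hall m (by omega) hm ⟨hchi, hc⟩
  · rintro ⟨h1, hall⟩
    refine ⟨by simp [h1], ?_⟩
    rintro m _ hm ⟨hchi, hc⟩
    exact hall m hm hchi hc

end Construction


section Final

def oFun (H : Set ℕ) (f : ℕ → ℕ → ℕ) : ℕ → ℕ := fun n =>
  if n % 2 = 0 then (if n / 2 ∈ H then 1 else 0) else f (n / 2).unpair.1 (n / 2).unpair.2

lemma joinO_eq (H : Set ℕ) (f : ℕ → ℕ → ℕ) :
    joinO (chOracle H) (pairFnOracle f) = fnOracle (oFun H f) := by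
  funext n
  unfold joinO chOracle pairFnOracle fnOracle oFun
  split <;> rfl

lemma oFun_even (H : Set ℕ) (f : ℕ → ℕ → ℕ) (n : ℕ) :
    oFun H f (2 * n) = if n ∈ H then 1 else 0 := by
  have h : 2 * n / 2 = n := by omega
  unfold oFun
  rw [if_pos (by omega), h]

lemma oFun_odd (H : Set ℕ) (f : ℕ → ℕ → ℕ) (k : ℕ) :
    oFun H f (2 * k + 1) = f k.unpair.1 k.unpair.2 := by
  have h : (2 * k + 1) / 2 = k := by omega
  unfold oFun
  rw [if_neg (by omega), h]

end Final

/-- If a stable coloring of pairs has an infinite set thin for its limit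
coloring, then that set joined with the coloring computes an infinite set thin
for the coloring itself. -/
theorem stmt5 (f : ℕ → ℕ → ℕ) (F : ℕ → ℕ)
    (hstab : ∀ x, ∀ᶠ s in atTop, f x s = F x)
    (H : Set ℕ) (hinf : H.Infinite)
    (hthin : ∃ c : ℕ, ∀ x ∈ H, F x ≠ c) :
    ∃ A : Set ℕ, A.Infinite ∧ (∃ c : ℕ, ∀ x ∈ A, ∀ s ∈ A, x < s → f x s ≠ c) ∧
      RecIn (joinO (chOracle H) (pairFnOracle f))
        (fnOracle fun n => if n ∈ A then 1 else 0) := by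
  obtain ⟨c, hc⟩ := hthin
  have hcrit : ∀ n, chiF (oFun H f) c n = 1 ↔
      (n ∈ H ∧ ∀ m < n, chiF (oFun H f) c m = 1 → f m n ≠ c) := by
    intro n
    rw [chiF_one_iff, oFun_even]
    constructor
    · rintro ⟨h1, h2⟩
      constructor
      · by_contra hno
        rw [if_neg hno] at h1
        simp at h1
      · intro m hm hmA hceq
        refine h2 m hm hmA ?_
        rw [oFun_odd, Nat.unpair_pair]
        exact hceq
    · rintro ⟨h1, h2⟩
      refine ⟨by simp [h1], fun m hm hmA => ?_⟩
      rw [oFun_odd, Nat.unpair_pair]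
      exact h2 m hm hmA
  refine ⟨{n | chiF (oFun H f) c n = 1}, ?_, ⟨c, ?_⟩, ?_⟩
  · -- infinite
    by_contra hfin
    rw [Set.not_infinite] at hfin
    have hev : ∀ᶠ s in atTop, ∀ m ∈ {n | chiF (oFun H f) c n = 1}, f m s = F m :=
      (Filter.eventually_all_finite hfin).2 fun m _ => hstab m
    obtain ⟨N, hN⟩ := Filter.eventually_atTop.1 hev
    obtain ⟨b, hb⟩ := hfin.bddAbove
    obtain ⟨s, hsH, hs⟩ := hinf.exists_gt (max N b)
    have hsA : chiF (oFun H f) c s = 1 := by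
      rw [hcrit]
      refine ⟨hsH, ?_⟩
      intro m _ hmA hceq
      have h1 : f m s = F m :=
        hN s (le_of_lt (lt_of_le_of_lt (le_max_left _ _) hs)) m hmA
      have hmH : m ∈ H := ((hcrit m).1 hmA).1
      exact hc m hmH (h1 ▸ hceq)
    have h2 : s ≤ b := hb hsA
    have h3 : max N b < s := hs
    omega
  · -- thin
    intro x hx s hs hlt
    exact ((hcrit s).1 hs).2 x hlt hx
  · -- RecIn
    rw [joinO_eq]
    have hchi : RecIn (fnOracle (oFun H f)) (fnOracle (chiF (oFun H f) c)) :=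
      recIn_chiF (RecIn.oracleSelf _)
    refine RecIn.of_eq hchi fun n => ?_
    have h1 := chiF_le_one (oFun H f) c n
    simp only [Set.mem_setOf_eq]
    split
    · omega
    · omega

end
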